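/- Let B be an abelian group and N ≥ 1 an integer. For x ∈ ℤ/N let x̄ ∈ {0,…,N−1} denote its integer representative. For ν ∈ B define t_ν(x,y) = x̄ȳ·ν and ω_ν(x,y,z) = x̄N·ν if ȳ + z̄ ≥ N and ω_ν(x,y,z) = 0 otherwise. Then the map sending ν to the class of (ω_ν, t_ν) is a group isomorphism from {ν ∈ B : N²ν = 0 and 2Nν = 0} onto H³_ab(ℤ/N, B); in particular, for each ν with N²ν = 2Nν = 0 the pair (ω_ν, t_ν) belongs to Z³_ab(ℤ/N, B) and its associated quadratic form is x ↦ x̄²·ν. -/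

import Mathlib

/-!
Statement 2: `H³_ab(ℤ/N, B) ≅ {ν ∈ B : N²ν = 0, 2Nν = 0}`, via
`ν ↦ [(ω_ν, t_ν)]` with `t_ν(x,y) = x̄ȳ·ν` and
`ω_ν(x,y,z) = x̄N·ν` if `ȳ + z̄ ≥ N`, `0` otherwise.
-/

namespace Stmt2

variable (A B : Type*) [AddCommGroup A] [AddCommGroup B]

/-- The group of pairs `(ω, t) ∈ C³(A,B) ⊕ C²(A,B)`. -/
abbrev P := (A → A → A → B) × (A → A → B)

/- Elementary "shape" homomorphisms used to build the cocycle conditions. -/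
def c1 : P A B →+ (A → A → A → A → B) :=
  AddMonoidHom.mk' (fun p x y z w => p.1 y z w) (fun _ _ => rfl)
def c2 : P A B →+ (A → A → A → A → B) :=
  AddMonoidHom.mk' (fun p x y z w => p.1 (x + y) z w) (fun _ _ => rfl)
def c3 : P A B →+ (A → A → A → A → B) :=
  AddMonoidHom.mk' (fun p x y z w => p.1 x (y + z) w) (fun _ _ => rfl)
def c4 : P A B →+ (A → A → A → A → B) :=
  AddMonoidHom.mk' (fun p x y z w => p.1 x y (z + w)) (fun _ _ => rfl)
def c5 : P A B →+ (A → A → A → A → B) :=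
  AddMonoidHom.mk' (fun p x y z w => p.1 x y z) (fun _ _ => rfl)

/-- `L1 p = d³(p.1)`: the condition `L1 p = 0` says `ω = p.1` is a 3-cocycle. -/
def L1 : P A B →+ (A → A → A → A → B) := c1 A B - c2 A B + c3 A B - c4 A B + c5 A B

def s1 : P A B →+ (A → A → A → B) :=
  AddMonoidHom.mk' (fun p x y z => p.2 y z) (fun _ _ => rfl)
def s2 : P A B →+ (A → A → A → B) :=
  AddMonoidHom.mk' (fun p x y z => p.2 (x + y) z) (fun _ _ => rfl)
def s3 : P A B →+ (A → A → A → B) :=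
  AddMonoidHom.mk' (fun p x y z => p.2 x z) (fun _ _ => rfl)
def s4 : P A B →+ (A → A → A → B) :=
  AddMonoidHom.mk' (fun p x y z => p.1 x y z) (fun _ _ => rfl)
def s5 : P A B →+ (A → A → A → B) :=
  AddMonoidHom.mk' (fun p x y z => p.1 x z y) (fun _ _ => rfl)
def s6 : P A B →+ (A → A → A → B) :=
  AddMonoidHom.mk' (fun p x y z => p.1 z x y) (fun _ _ => rfl)

/-- First hexagon condition:
`t(y,z) − t(x+y,z) + t(x,z) + ω(x,y,z) − ω(x,z,y) + ω(z,x,y) = 0`. -/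
def L2 : P A B →+ (A → A → A → B) := s1 A B - s2 A B + s3 A B + s4 A B - s5 A B + s6 A B

def u1 : P A B →+ (A → A → A → B) :=
  AddMonoidHom.mk' (fun p x y _z => p.2 x y) (fun _ _ => rfl)
def u2 : P A B →+ (A → A → A → B) :=
  AddMonoidHom.mk' (fun p x y z => p.2 x (y + z)) (fun _ _ => rfl)
def u5 : P A B →+ (A → A → A → B) :=
  AddMonoidHom.mk' (fun p x y z => p.1 y x z) (fun _ _ => rfl)
def u6 : P A B →+ (A → A → A → B) :=
  AddMonoidHom.mk' (fun p x y z => p.1 y z x) (fun _ _ => rfl)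

/-- Second hexagon condition:
`t(x,y) − t(x,y+z) + t(x,z) − ω(x,y,z) + ω(y,x,z) − ω(y,z,x) = 0`. -/
def L3 : P A B →+ (A → A → A → B) := u1 A B - u2 A B + s3 A B - s4 A B + u5 A B - u6 A B

/-- The group `Z³_ab(A,B)` of abelian 3-cocycles. -/
def Zab3 : AddSubgroup (P A B) := (L1 A B).ker ⊓ (L2 A B).ker ⊓ (L3 A B).ker

def f1 : (A → A → B) →+ (A → A → A → B) :=
  AddMonoidHom.mk' (fun κ _x y z => κ y z) (fun _ _ => rfl)
def f2 : (A → A → B) →+ (A → A → A → B) :=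
  AddMonoidHom.mk' (fun κ x y z => κ (x + y) z) (fun _ _ => rfl)
def f3 : (A → A → B) →+ (A → A → A → B) :=
  AddMonoidHom.mk' (fun κ x y z => κ x (y + z)) (fun _ _ => rfl)
def f4 : (A → A → B) →+ (A → A → A → B) :=
  AddMonoidHom.mk' (fun κ x y _z => κ x y) (fun _ _ => rfl)
def g1 : (A → A → B) →+ (A → A → B) :=
  AddMonoidHom.mk' (fun κ x y => κ y x) (fun _ _ => rfl)
def g2 : (A → A → B) →+ (A → A → B) :=
  AddMonoidHom.mk' (fun κ x y => κ x y) (fun _ _ => rfl)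

/-- The differential `∂ : C²_ab(A,B) → Z³_ab(A,B)` (as a map into pairs),
`∂(κ)(x,y,z) = κ(y,z) − κ(x+y,z) + κ(x,y+z) − κ(x,y)`,
`∂(κ)(x,y) = κ(y,x) − κ(x,y)`. -/
def bd : (A → A → B) →+ P A B := (f1 A B - f2 A B + f3 A B - f4 A B).prod (g1 A B - g2 A B)

/-- The abelian cohomology group `H³_ab(A,B) = Z³_ab(A,B)/Im ∂`. -/
abbrev Hab3 := Zab3 A B ⧸ ((bd A B).range.addSubgroupOf (Zab3 A B))

/-- The subgroup `{ν ∈ B : N²ν = 0 and 2Nν = 0}`. -/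
def nuSub (N : ℕ) : AddSubgroup B where
  carrier := {ν : B | ((N : ℤ) ^ 2) • ν = 0 ∧ ((2 * N : ℤ)) • ν = 0}
  zero_mem' := by simp
  add_mem' := by
    intro a b ha hb
    simp only [Set.mem_setOf_eq] at *
    exact ⟨by rw [smul_add, ha.1, hb.1, add_zero], by rw [smul_add, ha.2, hb.2, add_zero]⟩
  neg_mem' := by
    intro a ha
    simp only [Set.mem_setOf_eq] at *
    exact ⟨by rw [smul_neg, ha.1, neg_zero], by rw [smul_neg, ha.2, neg_zero]⟩

/-- `t_ν(x,y) = x̄ȳ·ν`. -/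
def tnu (N : ℕ) (ν : B) : ZMod N → ZMod N → B :=
  fun x y => ((x.val * y.val : ℤ)) • ν

/-- `ω_ν(x,y,z) = x̄N·ν` if `ȳ + z̄ ≥ N`, `0` otherwise. -/
def wnu (N : ℕ) (ν : B) : ZMod N → ZMod N → ZMod N → B :=
  fun x y z => if N ≤ y.val + z.val then ((x.val * N : ℤ)) • ν else 0

section Aux
variable {B : Type*} [AddCommGroup B]

/-- cancellation helpers -/
private lemma cancel1 {a g r : B} (ha : a = 0) (e : g = r - a) : g = r := by
  rw [e, ha, sub_zero]
private lemma cancel1' {a g r : B} (ha : a = 0) (e : g = r + a) : g = r := by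
  rw [e, ha, add_zero]
private lemma cancel2 {a b g r : B} (ha : a = 0) (hb : b = 0) (e : g = r - a - b) : g = r := by
  rw [e, ha, hb, sub_zero, sub_zero]
private lemma cancel3 {a b c g r : B} (ha : a = 0) (hb : b = 0) (hc : c = 0)
    (e : g = r - a - b - c) : g = r := by
  rw [e, ha, hb, hc, sub_zero, sub_zero, sub_zero]
private lemma cancel4 {a b c d g r : B} (ha : a = 0) (hb : b = 0) (hc : c = 0) (hd : d = 0)
    (e : g = r - a - b - c - d) : g = r := by
  rw [e, ha, hb, hc, hd, sub_zero, sub_zero, sub_zero, sub_zero]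

variable {A : Type*} [AddCommGroup A]

lemma mem_Zab3_iff (p : P A B) : p ∈ Zab3 A B ↔
    (∀ x y z w : A, p.1 y z w - p.1 (x+y) z w + p.1 x (y+z) w - p.1 x y (z+w) + p.1 x y z = 0) ∧
    (∀ x y z : A, p.2 y z - p.2 (x+y) z + p.2 x z + p.1 x y z - p.1 x z y + p.1 z x y = 0) ∧
    (∀ x y z : A, p.2 x y - p.2 x (y+z) + p.2 x z - p.1 x y z + p.1 y x z - p.1 y z x = 0) := by
  simp [Zab3, AddSubgroup.mem_inf, AddMonoidHom.mem_ker, L1, L2, L3, c1, c2, c3, c4, c5,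
    s1, s2, s3, s4, s5, s6, u1, u2, u5, u6, funext_iff, and_assoc]

lemma bd_fst (κ : A → A → B) (x y z : A) :
    (bd A B κ).1 x y z = κ y z - κ (x+y) z + κ x (y+z) - κ x y := rfl

lemma bd_snd (κ : A → A → B) (x y : A) :
    (bd A B κ).2 x y = κ y x - κ x y := rfl

end Aux

section LemA
/- Lemma A: torsion constraints on the quadratic form. -/
variable {A B : Type*} [AddCommGroup A] [AddCommGroup B]
variable {ω : A → A → A → B} {t : A → A → B}

private lemma w000
    (h1 : ∀ x y z w : A, ω y z w - ω (x+y) z w + ω x (y+z) w - ω x y (z+w) + ω x y z = 0) :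
    ω 0 0 0 = 0 := by
  have h := h1 0 0 0 0
  simp only [add_zero] at h
  -- h : ω 0 0 0 - ω 0 0 0 + ω 0 0 0 - ω 0 0 0 + ω 0 0 0 = 0
  calc ω 0 0 0 = ω 0 0 0 - ω 0 0 0 + ω 0 0 0 - ω 0 0 0 + ω 0 0 0 := by abel
  _ = 0 := h

private lemma t00
    (h1 : ∀ x y z w : A, ω y z w - ω (x+y) z w + ω x (y+z) w - ω x y (z+w) + ω x y z = 0)
    (h2 : ∀ x y z : A, t y z - t (x+y) z + t x z + ω x y z - ω x z y + ω z x y = 0) :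
    t 0 0 = 0 := by
  have h := h2 0 0 0
  simp only [add_zero] at h
  have h0 := w000 h1
  calc t 0 0 = (t 0 0 - t 0 0 + t 0 0 + ω 0 0 0 - ω 0 0 0 + ω 0 0 0) - ω 0 0 0 := by abel
  _ = 0 := by rw [h, h0]; simp

private lemma b_add
    (h2 : ∀ x y z : A, t y z - t (x+y) z + t x z + ω x y z - ω x z y + ω z x y = 0)
    (h3 : ∀ x y z : A, t x y - t x (y+z) + t x z - ω x y z + ω y x z - ω y z x = 0)
    (x y z : A) :
    t (x+y) z + t z (x+y) = (t x z + t z x) + (t y z + t z y) := by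
  refine cancel2 (h2 x y z) (h3 z x y) ?_
  abel

private lemma q_add
    (h1 : ∀ x y z w : A, ω y z w - ω (x+y) z w + ω x (y+z) w - ω x y (z+w) + ω x y z = 0)
    (h2 : ∀ x y z : A, t y z - t (x+y) z + t x z + ω x y z - ω x z y + ω z x y = 0)
    (h3 : ∀ x y z : A, t x y - t x (y+z) + t x z - ω x y z + ω y x z - ω y z x = 0)
    (x y : A) :
    t (x+y) (x+y) = t x x + t y y + (t x y + t y x) := by
  have h1' := h1 x y x y
  rw [show y + x = x + y from add_comm y x] at h1'
  refine cancel4 (h2 x y (x+y)) (h3 x x y) (h3 y x y) h1' ?_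
  abel

end LemA
section Torsion
variable {B : Type*} [AddCommGroup B] {N : ℕ} [NeZero N]
variable {ω : ZMod N → ZMod N → ZMod N → B} {t : ZMod N → ZMod N → B}

private lemma nsmul_one_cast (n : ℕ) : n • (1 : ZMod N) = (n : ZMod N) := by
  rw [nsmul_eq_mul, mul_one]

private lemma torsionA
    (h1 : ∀ x y z w : ZMod N, ω y z w - ω (x+y) z w + ω x (y+z) w - ω x y (z+w) + ω x y z = 0)
    (h2 : ∀ x y z : ZMod N, t y z - t (x+y) z + t x z + ω x y z - ω x z y + ω z x y = 0)
    (h3 : ∀ x y z : ZMod N, t x y - t x (y+z) + t x z - ω x y z + ω y x z - ω y z x = 0) :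
    ((N:ℤ)^2) • t 1 1 = 0 ∧ ((2*(N:ℕ) : ℤ)) • t 1 1 = 0 := by
  set b : ZMod N → ZMod N → B := fun x y => t x y + t y x with hbdef
  have hb : ∀ x y z, b (x+y) z = b x z + b y z := fun x y z => b_add h2 h3 x y z
  have hq : ∀ x y, t (x+y) (x+y) = t x x + t y y + b x y := fun x y => q_add h1 h2 h3 x y
  have hb0 : ∀ z, b 0 z = 0 := by
    intro z
    have h := hb 0 0 z
    rw [add_zero] at h
    have h' : b 0 z + 0 = b 0 z + b 0 z := by simpa using h
    exact (add_left_cancel h').symm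
  have hbn : ∀ n : ℕ, b ((n : ℕ) • (1 : ZMod N)) 1 = n • b 1 1 := by
    intro n
    induction n with
    | zero => simpa using hb0 1
    | succ m ih => rw [succ_nsmul, hb, ih, succ_nsmul]
  have hqn : ∀ n : ℕ, t ((n : ℕ) • (1 : ZMod N)) ((n : ℕ) • (1 : ZMod N)) = (n*n) • t 1 1 := by
    intro n
    induction n with
    | zero => simpa using t00 h1 h2
    | succ m ih =>
      rw [succ_nsmul, hq, ih, hbn m]
      show (m*m) • t 1 1 + t 1 1 + m • (t 1 1 + t 1 1) = ((m+1)*(m+1)) • t 1 1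
      module
  have hN1 : (N : ℕ) • (1 : ZMod N) = 0 := by
    rw [nsmul_one_cast, ZMod.natCast_self]
  have ht0 : t 0 0 = 0 := t00 h1 h2
  constructor
  · have h0 := hqn N
    rw [hN1, ht0] at h0
    have e : ((N:ℤ)^2) • t 1 1 = ((N*N : ℕ)) • t 1 1 := by
      rw [← natCast_zsmul (t 1 1) (N*N)]
      congr 1
      push_cast
      ring
    rw [e, ← h0]
  · have h0 := hbn N
    rw [hN1, hb0 1] at h0
    have hb11 : b 1 1 = t 1 1 + t 1 1 := rfl
    rw [hb11] at h0
    have e : ((2*(N:ℕ) : ℤ)) • t 1 1 = (N : ℕ) • (t 1 1 + t 1 1) := by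
      show _ = (N : ℕ) • (t 1 1 + t 1 1)
      rw [← natCast_zsmul (t 1 1 + t 1 1) N]
      module
    rw [e, ← h0]

end Torsion
section LemB
variable {B : Type*} [AddCommGroup B] {N : ℕ}

/-- `K a z = ω 0 0 z - ∑_{i<a} ω 1 i z`. -/
private def Kf (ω : ZMod N → ZMod N → ZMod N → B) : ℕ → ZMod N → B :=
  fun a z => ω 0 0 z - ∑ i ∈ Finset.range a, ω 1 (i : ZMod N) z

/-- `P z = ∑_{i<N} ω 1 i z`. -/
private def Pf (ω : ZMod N → ZMod N → ZMod N → B) : ZMod N → B :=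
  fun z => ∑ i ∈ Finset.range N, ω 1 (i : ZMod N) z

private def kap (ω : ZMod N → ZMod N → ZMod N → B) : ZMod N → ZMod N → B :=
  fun x y => Kf ω x.val y

/-- the 3-coboundary of a 2-cochain -/
private def dk (κ : ZMod N → ZMod N → B) : ZMod N → ZMod N → ZMod N → B :=
  fun x y z => κ y z - κ (x+y) z + κ x (y+z) - κ x y

private def sk (κ : ZMod N → ZMod N → B) : ZMod N → ZMod N → B :=
  fun x y => κ y x - κ x y

variable {ω : ZMod N → ZMod N → ZMod N → B} {t : ZMod N → ZMod N → B}

private lemma Kf_succ (a : ℕ) (z : ZMod N) :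
    Kf ω (a+1) z = Kf ω a z - ω 1 (a : ZMod N) z := by
  simp only [Kf, Finset.sum_range_succ]
  abel

private lemma Pf_shift (a : ℕ) (z : ZMod N) :
    ∑ i ∈ Finset.range N, ω 1 ((a+i : ℕ) : ZMod N) z = Pf ω z := by
  induction a with
  | zero => simp [Pf]
  | succ n ih =>
    rw [← ih]
    have e1 : ∀ i : ℕ, ((n+1+i : ℕ) : ZMod N) = ((n+(i+1) : ℕ) : ZMod N) := by
      intro i; congr 1; omega
    rw [Finset.sum_congr rfl (fun i _ => by rw [e1 i])]
    have hs' := Finset.sum_range_succ' (fun i => ω 1 ((n+i : ℕ) : ZMod N) z) N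
    have hs := Finset.sum_range_succ (fun i => ω 1 ((n+i : ℕ) : ZMod N) z) N
    have hNn : ((n+N : ℕ) : ZMod N) = ((n+0 : ℕ) : ZMod N) := by
      push_cast [ZMod.natCast_self]
      ring
    rw [hs] at hs'
    -- hs' : ∑_{i<N} f i + f N = ∑_{i<N} f (i+1) + f 0
    have := hs'
    rw [hNn] at this
    exact (add_right_cancel this).symm

private lemma Kf_per (a : ℕ) (z : ZMod N) :
    Kf ω (a+N) z = Kf ω a z - Pf ω z := by
  simp only [Kf, Finset.sum_range_add]
  rw [Finset.sum_congr rfl (fun i _ => rfl), Pf_shift a z]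
  abel

private lemma dKf
    (h1 : ∀ x y z w : ZMod N, ω y z w - ω (x+y) z w + ω x (y+z) w - ω x y (z+w) + ω x y z = 0)
    (a b : ℕ) (c : ZMod N) :
    Kf ω b c - Kf ω (a+b) c + Kf ω a ((b : ZMod N)+c) - Kf ω a (b : ZMod N)
      = ω (a : ZMod N) (b : ZMod N) c := by
  induction a with
  | zero =>
    have h := h1 0 0 (b : ZMod N) c
    simp only [add_zero, zero_add] at h
    -- h : ω 0 b c - ω 0 b c + ω 0 b c - ω 0 0 (b + c) + ω 0 0 b = 0
    simp only [Kf, Finset.sum_range_zero, Nat.cast_zero, zero_add, sub_zero]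
    refine cancel1 h ?_
    abel
  | succ n ih =>
    have h := h1 1 (n : ZMod N) (b : ZMod N) c
    rw [show (1 : ZMod N) + (n : ZMod N) = ((n+1 : ℕ) : ZMod N) by push_cast; ring,
        show (n : ZMod N) + (b : ZMod N) = ((n+b : ℕ) : ZMod N) by push_cast; ring] at h
    -- h : ω n b c - ω (n+1) b c + ω 1 (n+b) c - ω 1 n (b+c) + ω 1 n b = 0
    rw [show n+1+b = (n+b)+1 by omega, Kf_succ (n+b) c, Kf_succ n ((b : ZMod N)+c),
        Kf_succ n (b : ZMod N), show ((n+1 : ℕ) : ZMod N) = ((n : ℕ) : ZMod N) + 1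
          by push_cast; ring] at *
    refine cancel1' h ?_
    rw [← ih]
    abel

private lemma ddk (κ : ZMod N → ZMod N → B) (x y z w : ZMod N) :
    dk κ y z w - dk κ (x+y) z w + dk κ x (y+z) w - dk κ x y (z+w) + dk κ x y z = 0 := by
  simp only [dk, add_assoc]
  abel

private lemma hexk2 (κ : ZMod N → ZMod N → B) (x y z : ZMod N) :
    sk κ y z - sk κ (x+y) z + sk κ x z + dk κ x y z - dk κ x z y + dk κ z x y = 0 := by
  simp only [dk, sk]
  rw [show z+y = y+z from add_comm z y, show z+x = x+z from add_comm z x]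
  abel

private lemma hexk3 (κ : ZMod N → ZMod N → B) (x y z : ZMod N) :
    sk κ x y - sk κ x (y+z) + sk κ x z - dk κ x y z + dk κ y x z - dk κ y z x = 0 := by
  simp only [dk, sk]
  rw [show y+x = x+y from add_comm y x, show z+x = x+z from add_comm z x]
  abel

end LemB
section Carry
variable {B : Type*} [AddCommGroup B] {N : ℕ} [NeZero N]
variable {ω : ZMod N → ZMod N → ZMod N → B} {t : ZMod N → ZMod N → B}

/-- integer carry -/
private def Cz (x y : ZMod N) : ℤ := if N ≤ x.val + y.val then 1 else 0

private lemma val_add_carry (x y : ZMod N) (h : N ≤ x.val + y.val) :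
    x.val + y.val = (x+y).val + N := by
  have hv := ZMod.val_add x y
  have hx := ZMod.val_lt x
  have hy := ZMod.val_lt y
  have hm : (x.val + y.val) % N = x.val + y.val - N := by
    rw [Nat.mod_eq_sub_mod h, Nat.mod_eq_of_lt (by omega)]
  omega

private lemma val_add_nocarry (x y : ZMod N) (h : ¬ N ≤ x.val + y.val) :
    x.val + y.val = (x+y).val := by
  have hv := ZMod.val_add x y
  rw [hv, Nat.mod_eq_of_lt (by omega)]

private lemma NCz (x y : ZMod N) :
    (N : ℤ) * Cz x y = (x.val : ℤ) + (y.val : ℤ) - ((x+y).val : ℤ) := by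
  unfold Cz
  split
  · next h => have := val_add_carry x y h; push_cast; omega
  · next h => have := val_add_nocarry x y h; push_cast; omega

private lemma Cz_cocycle (x y z : ZMod N) :
    Cz y z - Cz (x+y) z + Cz x (y+z) = Cz x y := by
  have hNz : (N : ℤ) ≠ 0 := by
    have := NeZero.pos N; push_cast; omega
  apply mul_left_cancel₀ hNz
  have hassoc : (((x+y)+z).val : ℤ) = ((x+(y+z)).val : ℤ) := by rw [add_assoc]
  have e1 := NCz y z
  have e2 := NCz (x+y) z
  have e3 := NCz x (y+z)
  have e4 := NCz x y
  linear_combination e1 - e2 + e3 - e4 + hassoc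

private lemma natCast_val_self (x : ZMod N) : ((x.val : ℕ) : ZMod N) = x :=
  ZMod.natCast_rightInverse x

private lemma dkap
    (h1 : ∀ x y z w : ZMod N, ω y z w - ω (x+y) z w + ω x (y+z) w - ω x y (z+w) + ω x y z = 0)
    (x y z : ZMod N) :
    dk (kap ω) x y z = ω x y z - (if N ≤ x.val + y.val then Pf ω z else 0) := by
  have hD := dKf h1 x.val y.val z
  rw [natCast_val_self x, natCast_val_self y] at hD
  show Kf ω y.val z - Kf ω (x+y).val z + Kf ω x.val (y+z) - Kf ω x.val y
      = ω x y z - (if N ≤ x.val + y.val then Pf ω z else 0)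
  by_cases h : N ≤ x.val + y.val
  · rw [if_pos h]
    have hv : x.val + y.val = (x+y).val + N := val_add_carry x y h
    rw [hv, Kf_per] at hD
    rw [← hD]
    abel
  · rw [if_neg h]
    have hv : x.val + y.val = (x+y).val := val_add_nocarry x y h
    rw [hv] at hD
    rw [← hD]
    abel

end Carry
section Triv
variable {B : Type*} [AddCommGroup B] {N : ℕ} [NeZero N]
variable {ω : ZMod N → ZMod N → ZMod N → B} {t : ZMod N → ZMod N → B}

private lemma addhom_eval {f : ZMod N → B} (hf : ∀ a b, f (a+b) = f a + f b) (x : ZMod N) :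
    f x = x.val • f 1 := by
  have h : f (x.val • (1 : ZMod N)) = x.val • f 1 :=
    (AddMonoidHom.mk' f hf).map_nsmul x.val 1
  rw [nsmul_one_cast, natCast_val_self] at h
  exact h

private lemma Pf_one
    (h3 : ∀ x y z : ZMod N, t x y - t x (y+z) + t x z - ω x y z + ω y x z - ω y z x = 0) :
    Pf ω 1 = (t 1 0 - t 1 ((N : ℕ) : ZMod N)) + N • t 1 1 := by
  have e : ∀ i : ℕ, ω 1 (i : ZMod N) 1
      = (t 1 ((i : ℕ) : ZMod N) - t 1 (((i+1 : ℕ)) : ZMod N)) + t 1 1 := by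
    intro i
    have h := h3 1 (i : ZMod N) 1
    rw [show (i : ZMod N) + 1 = ((i+1 : ℕ) : ZMod N) by push_cast; ring] at h
    refine cancel1 h ?_
    abel
  unfold Pf
  rw [Finset.sum_congr rfl (fun i _ => e i), Finset.sum_add_distrib,
    Finset.sum_range_sub' (fun i => t 1 ((i : ℕ) : ZMod N)) N,
    Finset.sum_const, Finset.card_range]
  norm_num

private lemma ite_Pf_zero
    (h1 : ∀ x y z w : ZMod N, ω y z w - ω (x+y) z w + ω x (y+z) w - ω x y (z+w) + ω x y z = 0)
    (h3 : ∀ x y z : ZMod N, t x y - t x (y+z) + t x z - ω x y z + ω y x z - ω y z x = 0)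
    (hv : t 1 1 = 0)
    (x y z : ZMod N) :
    (if N ≤ x.val + y.val then Pf ω z else 0) = 0 := by
  by_cases hN1 : N = 1
  · subst hN1
    have hx : x = 0 := Subsingleton.elim x 0
    have hy : y = 0 := Subsingleton.elim y 0
    rw [hx, hy, if_neg]
    rw [ZMod.val_zero]
    omega
  · -- N ≥ 2
    have hN2 : 2 ≤ N := by have := NeZero.pos N; omega
    have hI : ∀ a b c : ZMod N,
        (if N ≤ a.val + b.val then Pf ω c else 0) = ω a b c - dk (kap ω) a b c := by
      intro a b c
      rw [dkap h1]
      all_goals abel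
    have hsm : ∀ a b c : ZMod N,
        (if N ≤ a.val + b.val then Pf ω c else 0) = Cz a b • Pf ω c := by
      intro a b c
      unfold Cz
      split <;> simp
    have hIc : ∀ x y z w : ZMod N,
        Cz y z • Pf ω w - Cz (x+y) z • Pf ω w + Cz x (y+z) • Pf ω w
          - Cz x y • Pf ω (z+w) + Cz x y • Pf ω z = 0 := by
      intro x y z w
      rw [← hsm, ← hsm, ← hsm, ← hsm, ← hsm]
      calc (if N ≤ y.val + z.val then Pf ω w else 0)
            - (if N ≤ (x+y).val + z.val then Pf ω w else 0)
            + (if N ≤ x.val + (y+z).val then Pf ω w else 0)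
            - (if N ≤ x.val + y.val then Pf ω (z+w) else 0)
            + (if N ≤ x.val + y.val then Pf ω z else 0)
          = (ω y z w - ω (x+y) z w + ω x (y+z) w - ω x y (z+w) + ω x y z)
            - (dk (kap ω) y z w - dk (kap ω) (x+y) z w + dk (kap ω) x (y+z) w
              - dk (kap ω) x y (z+w) + dk (kap ω) x y z) := by
            rw [hI, hI, hI, hI, hI]; abel
      _ = 0 := by rw [h1 x y z w, ddk (kap ω) x y z w, sub_zero]
    have hfact : ∀ x y z w : ZMod N,
        Cz x y • (Pf ω w - Pf ω (z+w) + Pf ω z) = 0 := by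
      intro x y z w
      have hc := Cz_cocycle x y z
      calc Cz x y • (Pf ω w - Pf ω (z+w) + Pf ω z)
          = Cz y z • Pf ω w - Cz (x+y) z • Pf ω w + Cz x (y+z) • Pf ω w
            - Cz x y • Pf ω (z+w) + Cz x y • Pf ω z := by
            rw [← hc]
            simp only [smul_sub, smul_add, sub_smul, add_smul]
            all_goals abel
      _ = 0 := hIc x y z w
    set c₀ : ZMod N := ((N-1 : ℕ) : ZMod N) with hc₀
    have hval : c₀.val = N-1 := ZMod.val_cast_of_lt (by omega)
    have hCone : Cz c₀ c₀ = 1 := by unfold Cz; rw [hval, if_pos (by omega)]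
    have hPadd : ∀ z w : ZMod N, Pf ω (z+w) = Pf ω z + Pf ω w := by
      intro z w
      have h := hfact c₀ c₀ z w
      rw [hCone, one_smul] at h
      have h' : Pf ω w - Pf ω (z+w) + Pf ω z = 0 := h
      refine cancel1 h' ?_
      abel
    have hPz : ∀ z : ZMod N, Pf ω z = 0 := by
      intro z
      rw [addhom_eval hPadd z]
      have hP1 : Pf ω 1 = 0 := by
        rw [Pf_one h3, ZMod.natCast_self, hv]
        simp
      rw [hP1, smul_zero]
    split <;> simp [hPz]

end Triv
section Triv2
variable {B : Type*} [AddCommGroup B] {N : ℕ} [NeZero N]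
variable {ω : ZMod N → ZMod N → ZMod N → B} {t : ZMod N → ZMod N → B}

private lemma cancel2s {a b g r : B} (ha : a = 0) (hb : b = 0) (e : g = r - a + b) : g = r := by
  rw [e, ha, hb, sub_zero, add_zero]

private lemma trivialize
    (h1 : ∀ x y z w : ZMod N, ω y z w - ω (x+y) z w + ω x (y+z) w - ω x y (z+w) + ω x y z = 0)
    (h2 : ∀ x y z : ZMod N, t y z - t (x+y) z + t x z + ω x y z - ω x z y + ω z x y = 0)
    (h3 : ∀ x y z : ZMod N, t x y - t x (y+z) + t x z - ω x y z + ω y x z - ω y z x = 0)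
    (hv : t 1 1 = 0) :
    ∃ κ : ZMod N → ZMod N → B, bd (ZMod N) B κ = (ω, t) := by
  refine ⟨kap ω, ?_⟩
  have hω : ∀ x y z : ZMod N, dk (kap ω) x y z = ω x y z := by
    intro x y z
    rw [dkap h1, ite_Pf_zero h1 h3 hv, sub_zero]
  have hx2 : ∀ x y z : ZMod N,
      sk (kap ω) y z - sk (kap ω) (x+y) z + sk (kap ω) x z
        + ω x y z - ω x z y + ω z x y = 0 := by
    intro x y z
    have h := hexk2 (kap ω) x y z
    rw [hω, hω, hω] at h
    exact h
  have hx3 : ∀ x y z : ZMod N,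
      sk (kap ω) x y - sk (kap ω) x (y+z) + sk (kap ω) x z
        - ω x y z + ω y x z - ω y z x = 0 := by
    intro x y z
    have h := hexk3 (kap ω) x y z
    rw [hω, hω, hω] at h
    exact h
  have ht'1 : ∀ x y z : ZMod N,
      (t (x+y) z - sk (kap ω) (x+y) z)
        = (t x z - sk (kap ω) x z) + (t y z - sk (kap ω) y z) := by
    intro x y z
    refine cancel2s (h2 x y z) (hx2 x y z) ?_
    abel
  have ht'2 : ∀ x y z : ZMod N,
      (t x (y+z) - sk (kap ω) x (y+z))
        = (t x y - sk (kap ω) x y) + (t x z - sk (kap ω) x z) := by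
    intro x y z
    refine cancel2s (h3 x y z) (hx3 x y z) ?_
    abel
  have ht'11 : t 1 1 - sk (kap ω) 1 1 = 0 := by
    simp [sk, hv]
  have ht'0 : ∀ x y : ZMod N, t x y - sk (kap ω) x y = 0 := by
    intro x y
    have e1 : t x y - sk (kap ω) x y
        = x.val • (t 1 y - sk (kap ω) 1 y) :=
      addhom_eval (f := fun a => t a y - sk (kap ω) a y) (fun a b => ht'1 a b y) x
    have e2 : t 1 y - sk (kap ω) 1 y
        = y.val • (t 1 1 - sk (kap ω) 1 1) :=
      addhom_eval (f := fun b => t 1 b - sk (kap ω) 1 b) (fun a b => ht'2 1 a b) y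
    rw [e1, e2, ht'11, smul_zero, smul_zero]
  have hts : ∀ x y : ZMod N, sk (kap ω) x y = t x y := by
    intro x y
    have := sub_eq_zero.mp (ht'0 x y)
    exact this.symm
  rw [Prod.ext_iff]
  constructor
  · funext x y z
    exact hω x y z
  · funext x y
    exact hts x y

end Triv2
section Hmem
variable {B : Type*} [AddCommGroup B] {N : ℕ} [NeZero N]

private lemma Cz_comm (x y : ZMod N) : Cz x y = Cz y x := by
  unfold Cz
  rw [Nat.add_comm]

private lemma wnu_eq (ν : B) (x y z : ZMod N) :
    wnu B N ν x y z = (((x.val : ℤ) * N) * Cz y z) • ν := by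
  unfold wnu Cz
  split <;> simp

private lemma tnu_eq (ν : B) (x y : ZMod N) :
    tnu B N ν x y = ((x.val : ℤ) * (y.val : ℤ)) • ν := rfl

private lemma hmemZ {ν : B} (hν1 : ((N:ℤ)^2) • ν = 0) (hν2 : ((2*(N:ℕ) : ℤ)) • ν = 0) :
    (wnu B N ν, tnu B N ν) ∈ Zab3 (ZMod N) B := by
  rw [mem_Zab3_iff]
  refine ⟨?_, ?_, ?_⟩
  · intro x y z w
    show wnu B N ν y z w - wnu B N ν (x+y) z w + wnu B N ν x (y+z) w
        - wnu B N ν x y (z+w) + wnu B N ν x y z = 0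
    simp only [wnu_eq]
    rw [← sub_smul, ← add_smul, ← sub_smul, ← add_smul]
    have e : ((y.val : ℤ) * N) * Cz z w - (((x+y).val : ℤ) * N) * Cz z w
        + ((x.val : ℤ) * N) * Cz (y+z) w - ((x.val : ℤ) * N) * Cz y (z+w)
        + ((x.val : ℤ) * N) * Cz y z
        = ((N:ℤ)^2) * (Cz x y * Cz z w) := by
      have a1 := NCz x y
      have a2 := Cz_cocycle y z w
      linear_combination -(N:ℤ) * Cz z w * a1 - (N:ℤ) * (x.val : ℤ) * a2
    rw [e, mul_comm, mul_smul, hν1, smul_zero]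
  · intro x y z
    show tnu B N ν y z - tnu B N ν (x+y) z + tnu B N ν x z + wnu B N ν x y z
        - wnu B N ν x z y + wnu B N ν z x y = 0
    simp only [wnu_eq, tnu_eq]
    rw [← sub_smul, ← add_smul, ← add_smul, ← sub_smul, ← add_smul]
    have e : (y.val : ℤ) * (z.val : ℤ) - ((x+y).val : ℤ) * (z.val : ℤ)
        + (x.val : ℤ) * (z.val : ℤ) + ((x.val : ℤ) * N) * Cz y z
        - ((x.val : ℤ) * N) * Cz z y + ((z.val : ℤ) * N) * Cz x y
        = ((2*(N:ℕ) : ℤ)) * ((z.val : ℤ) * Cz x y) := by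
      have a1 := NCz x y
      have hc := Cz_comm y z
      linear_combination -(z.val : ℤ) * a1 + ((x.val : ℤ) * N) * hc
    rw [e, mul_comm, mul_smul, hν2, smul_zero]
  · intro x y z
    show tnu B N ν x y - tnu B N ν x (y+z) + tnu B N ν x z - wnu B N ν x y z
        + wnu B N ν y x z - wnu B N ν y z x = 0
    simp only [wnu_eq, tnu_eq]
    rw [← sub_smul, ← add_smul, ← sub_smul, ← add_smul, ← sub_smul]
    have e : (x.val : ℤ) * (y.val : ℤ) - (x.val : ℤ) * (((y+z).val : ℤ))
        + (x.val : ℤ) * (z.val : ℤ) - ((x.val : ℤ) * N) * Cz y z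
        + ((y.val : ℤ) * N) * Cz x z - ((y.val : ℤ) * N) * Cz z x
        = 0 := by
      have a1 := NCz y z
      have hc := Cz_comm x z
      linear_combination -(x.val : ℤ) * a1 + ((y.val : ℤ) * N) * hc
    rw [e, zero_smul]

end Hmem
theorem statement2' {B : Type*} [AddCommGroup B] (N : ℕ) (hN : 1 ≤ N) :
    ∃ (hmem : ∀ ν : B, ν ∈ nuSub B N → (wnu B N ν, tnu B N ν) ∈ Zab3 (ZMod N) B)
      (e : nuSub B N ≃+ Hab3 (ZMod N) B),
      (∀ ν : nuSub B N,
          e ν = QuotientAddGroup.mk ⟨(wnu B N (ν : B), tnu B N (ν : B)), hmem ν ν.2⟩) ∧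
      (∀ (ν : B) (x : ZMod N), tnu B N ν x x = ((x.val ^ 2 : ℤ)) • ν) := by
  haveI : NeZero N := ⟨by omega⟩
  have hmem : ∀ ν : B, ν ∈ nuSub B N → (wnu B N ν, tnu B N ν) ∈ Zab3 (ZMod N) B := by
    intro ν hν
    exact hmemZ hν.1 hν.2
  let φ : nuSub B N →+ Zab3 (ZMod N) B := AddMonoidHom.mk'
    (fun ν => ⟨(wnu B N ν, tnu B N ν), hmem ν ν.2⟩)
    (by
      intro a b
      apply Subtype.ext
      rw [Prod.ext_iff]
      constructor
      · funext x y z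
        show wnu B N ((a : B) + (b : B)) x y z = wnu B N a x y z + wnu B N b x y z
        unfold wnu
        split
        · rw [smul_add]
        · rw [add_zero]
      · funext x y
        show tnu B N ((a : B) + (b : B)) x y = tnu B N a x y + tnu B N b x y
        unfold tnu
        rw [smul_add])
  let e0 : nuSub B N →+ Hab3 (ZMod N) B :=
    (QuotientAddGroup.mk' ((bd (ZMod N) B).range.addSubgroupOf (Zab3 (ZMod N) B))).comp φ
  have hinj : Function.Injective e0 := by
    rw [injective_iff_map_eq_zero]
    intro ν h0
    have h0' : (φ ν : Zab3 (ZMod N) B)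
        ∈ (bd (ZMod N) B).range.addSubgroupOf (Zab3 (ZMod N) B) := by
      rw [← QuotientAddGroup.eq_zero_iff]
      simpa [e0, QuotientAddGroup.mk'_apply] using h0
    rw [AddSubgroup.mem_addSubgroupOf] at h0'
    obtain ⟨κ, hκ⟩ := h0'
    have ht : tnu B N (ν : B) 1 1 = 0 := by
      have h := congrArg (fun p => p.2 1 1) hκ
      have h' : (φ ν : P (ZMod N) B).2 1 1 = 0 := by simpa [bd_snd] using h.symm
      exact h'
    have hν0 : (ν : B) = 0 := by
      by_cases hN1 : N = 1
      · have h := ν.2.1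
        have hone : ((N:ℤ)^2) = 1 := by rw [hN1]; norm_num
        rw [hone, one_smul] at h
        exact h
      · haveI : Fact (1 < N) := ⟨by omega⟩
        have h := ht
        unfold tnu at h
        rw [ZMod.val_one] at h
        simpa using h
    exact Subtype.ext hν0
  have hsurj : Function.Surjective e0 := by
    intro c
    refine QuotientAddGroup.induction_on c ?_
    rintro ⟨p, hp⟩
    obtain ⟨hp1, hp2, hp3⟩ := (mem_Zab3_iff p).mp hp
    set ν : B := p.2 1 1 with hνdef
    have htor := torsionA hp1 hp2 hp3
    have hν : ν ∈ nuSub B N := ⟨htor.1, htor.2⟩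
    refine ⟨⟨ν, hν⟩, ?_⟩
    have hd : ∃ κ, bd (ZMod N) B κ = p - (wnu B N ν, tnu B N ν) := by
      have hqm : p - (wnu B N ν, tnu B N ν) ∈ Zab3 (ZMod N) B := sub_mem hp (hmem ν hν)
      obtain ⟨hq1, hq2, hq3⟩ := (mem_Zab3_iff _).mp hqm
      have hv : (p - (wnu B N ν, tnu B N ν)).2 1 1 = 0 := by
        have he : (p - (wnu B N ν, tnu B N ν)).2 1 1 = p.2 1 1 - tnu B N ν 1 1 := rfl
        by_cases hN1 : N = 1
        · have hz : ν = 0 := by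
            have h := htor.1
            have hone : ((N:ℤ)^2) = 1 := by rw [hN1]; norm_num
            rw [hone, one_smul] at h
            rw [hνdef]
            exact h
          rw [he, ← hνdef, hz]
          simp [tnu]
        · haveI : Fact (1 < N) := ⟨by omega⟩
          rw [he, ← hνdef]
          unfold tnu
          rw [ZMod.val_one]
          simp
      exact trivialize hq1 hq2 hq3 hv
    obtain ⟨κ, hκ⟩ := hd
    show (QuotientAddGroup.mk' _) (φ ⟨ν, hν⟩) = QuotientAddGroup.mk ⟨p, hp⟩
    rw [QuotientAddGroup.mk'_apply, QuotientAddGroup.eq]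
    rw [AddSubgroup.mem_addSubgroupOf]
    refine ⟨κ, ?_⟩
    rw [hκ]
    show p - (wnu B N ν, tnu B N ν)
        = ((-(φ ⟨ν, hν⟩) + (⟨p, hp⟩ : Zab3 (ZMod N) B) : Zab3 (ZMod N) B) : P (ZMod N) B)
    rw [AddSubgroup.coe_add, AddSubgroup.coe_neg, sub_eq_neg_add]
    rfl
  refine ⟨hmem, AddEquiv.ofBijective e0 ⟨hinj, hsurj⟩, ?_, ?_⟩
  · intro ν
    rfl
  · intro ν x
    show ((x.val : ℤ) * (x.val : ℤ)) • ν = ((x.val : ℤ) ^ 2) • ν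
    rw [sq]

/-- The map `ν ↦ [(ω_ν, t_ν)]` is a group isomorphism
`{ν ∈ B : N²ν = 2Nν = 0} ≅ H³_ab(ℤ/N, B)`; in particular each `(ω_ν, t_ν)`
lies in `Z³_ab(ℤ/N,B)` and its associated quadratic form is `x ↦ x̄²·ν`. -/
theorem statement2 (N : ℕ) (hN : 1 ≤ N) :
    ∃ (hmem : ∀ ν : B, ν ∈ nuSub B N → (wnu B N ν, tnu B N ν) ∈ Zab3 (ZMod N) B)
      (e : nuSub B N ≃+ Hab3 (ZMod N) B),
      (∀ ν : nuSub B N,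
          e ν = QuotientAddGroup.mk ⟨(wnu B N (ν : B), tnu B N (ν : B)), hmem ν ν.2⟩) ∧
      (∀ (ν : B) (x : ZMod N), tnu B N ν x x = ((x.val ^ 2 : ℤ)) • ν) := by
  exact statement2' (B := B) N hN

end Stmt2
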